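/- Let (a,b,c) ∈ ℝ³ with a²+b²+c² ≠ 0 and set r = a²+b²+c². On 𝔥(2,1)_{a,b,c} with the orthonormal metric, the curvature 2-forms of the Levi-Civita connection are: Ωⁱ₅ = (r/4) eⁱ∧e⁵ for i = 1,…,4, and Ω¹₂ = −(3a/4)·de⁵ − (r/4)e³∧e⁴, Ω¹₃ = −(3b/4)·de⁵ + (r/4)e²∧e⁴, Ω¹₄ = −(3c/4)·de⁵ − (r/4)e²∧e³, Ω²₃ = (3c/4)·de⁵ − (r/4)e¹∧e⁴, Ω²₄ = −(3b/4)·de⁵ + (r/4)e¹∧e³, Ω³₄ = (3a/4)·de⁵ − (r/4)e¹∧e², with Ωⱼᵢ = −Ωⁱⱼ. -/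
import Mathlib


noncomputable section
open Real

/-- ℝ⁵, the underlying space of the Lie algebra 𝔥(2,1)_{a,b,c}. -/
abbrev V : Type := Fin 5 → ℝ

/-- The standard (orthonormal) basis vectors E₁,…,E₅ (0-indexed). -/
def E (i : Fin 5) : V := Pi.single i 1

/-- The inner product making E₁,…,E₅ orthonormal. -/
def ip (x y : V) : ℝ := ∑ i, x i * y i

/-- The dual basis 1-forms e¹,…,e⁵ (0-indexed). -/
def e (i : Fin 5) : V → ℝ := fun x => x i

/-- The Lie bracket of 𝔥(2,1)_{a,b,c}: the only nonzero brackets of basis vectors are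
[E₁,E₂] = −aE₅, [E₃,E₄] = aE₅, [E₁,E₃] = −bE₅, [E₂,E₄] = −bE₅, [E₁,E₄] = −cE₅,
[E₂,E₃] = cE₅. -/
def br (a b c : ℝ) (x y : V) : V := fun k =>
  if k = 4 then
    -a * (x 0 * y 1 - x 1 * y 0) + a * (x 2 * y 3 - x 3 * y 2)
      - b * (x 0 * y 2 - x 2 * y 0) - b * (x 1 * y 3 - x 3 * y 1)
      - c * (x 0 * y 3 - x 3 * y 0) + c * (x 1 * y 2 - x 2 * y 1)
  else 0

/-- Chevalley–Eilenberg differential of a 1-form: dα(X,Y) = −α([X,Y]). -/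
def d1 (a b c : ℝ) (α : V → ℝ) : V → V → ℝ := fun x y => -α (br a b c x y)

/-- dη = de⁵, the Chevalley–Eilenberg differential of η = e⁵. -/
def dEta (a b c : ℝ) : V → V → ℝ := d1 a b c (e 4)

/-- Wedge product of two 1-forms. -/
def w11 (α β : V → ℝ) : V → V → ℝ := fun x y => α x * β y - α y * β x

/-- Wedge product of a 1-form and a 2-form. -/
def w12 (α : V → ℝ) (β : V → V → ℝ) : V → V → V → ℝ :=
  fun x y z => α x * β y z - α y * β x z + α z * β x y

/-- Wedge product of two 2-forms. -/
def w22 (α β : V → V → ℝ) : V → V → V → V → ℝ := fun x y z w =>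
  α x y * β z w - α x z * β y w + α x w * β y z
    + α y z * β x w - α y w * β x z + α z w * β x y

/-- The 4-form e¹∧e²∧e³∧e⁴. -/
def e1234 : V → V → V → V → ℝ := w22 (w11 (e 0) (e 1)) (w11 (e 2) (e 3))

/-- The torsion 3-form T = η∧dη. -/
def T3 (a b c : ℝ) : V → V → V → ℝ := w12 (e 4) (dEta a b c)

/-- Chevalley–Eilenberg differential of a 3-form. -/
def d3 (a b c : ℝ) (T : V → V → V → ℝ) : V → V → V → V → ℝ := fun x y z w =>
  -T (br a b c x y) z w + T (br a b c x z) y w - T (br a b c x w) y z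
    - T (br a b c y z) x w + T (br a b c y w) x z - T (br a b c z w) x y

/-- The Levi-Civita (Koszul) connection of the left-invariant metric:
2⟨∇_X Y, Z⟩ = ⟨[X,Y],Z⟩ − ⟨[Y,Z],X⟩ + ⟨[Z,X],Y⟩. -/
def nablaG (a b c : ℝ) (x y : V) : V := fun k =>
  (1 / 2) * (ip (br a b c x y) (E k) - ip (br a b c y (E k)) x + ip (br a b c (E k) x) y)

/-- The torsion connection ∇⁺: ⟨∇⁺_X Y, Z⟩ = ⟨∇_X Y, Z⟩ + ½T(X,Y,Z). -/
def nablaP (a b c : ℝ) (x y : V) : V := fun k =>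
  nablaG a b c x y k + (1 / 2) * T3 a b c x y (E k)

/-- Connection 1-forms ωⁱⱼ(X) = ⟨D_X E_j, E_i⟩ of a connection D. -/
def conn1 (D : V → V → V) (i j : Fin 5) : V → ℝ := fun x => ip (D x (E j)) (E i)

/-- Curvature 2-forms Ωⁱⱼ = dσⁱⱼ + Σ_k σⁱ_k ∧ σᵏⱼ of connection 1-forms σ. -/
def curv (a b c : ℝ) (σ : Fin 5 → Fin 5 → V → ℝ) (i j : Fin 5) : V → V → ℝ :=
  fun x y => d1 a b c (σ i j) x y + ∑ k, (σ i k x * σ k j y - σ i k y * σ k j x)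

/-- First Pontrjagin 4-form p₁ = (1/8π²) Σ_{1≤i<j≤5} Ωⁱⱼ∧Ωⁱⱼ. -/
def pont (Ω : Fin 5 → Fin 5 → V → V → ℝ) : V → V → V → V → ℝ := fun x y z w =>
  (1 / (8 * π ^ 2)) * ∑ i, ∑ j, if i < j then w22 (Ω i j) (Ω i j) x y z w else 0

/-- The endomorphism ψ: ψE₁ = −E₂, ψE₂ = E₁, ψE₃ = −E₄, ψE₄ = E₃, ψE₅ = 0. -/
def psi (x : V) : V := ![x 1, -x 0, x 3, -x 2, 0]

/-- The coefficients of the connection 1-forms σⁱⱼ = (S i j)·e⁵ of the instanton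
A_{λ,μ,τ}: σ¹₂ = −σ²₁ = −σ³₄ = σ⁴₃ = −λe⁵, σ¹₃ = −σ³₁ = σ²₄ = −σ⁴₂ = −μe⁵,
σ¹₄ = −σ⁴₁ = −σ²₃ = σ³₂ = −τe⁵, all other σⁱⱼ = 0. -/
def S (lam mu tau : ℝ) : Fin 5 → Fin 5 → ℝ :=
  ![![0, -lam, -mu, -tau, 0],
    ![lam, 0, tau, -mu, 0],
    ![mu, -tau, 0, lam, 0],
    ![tau, mu, -lam, 0, 0],
    ![0, 0, 0, 0, 0]]

/-- The connection 1-forms of the instanton A_{λ,μ,τ}. -/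
def sigmaA (lam mu tau : ℝ) (i j : Fin 5) : V → ℝ := fun x => S lam mu tau i j * e 4 x

/-! ### Auxiliary lemmas -/

/-- The bilinear form giving the E₅-component of the bracket. -/
def B (a b c : ℝ) (x y : V) : ℝ :=
    -a * (x 0 * y 1 - x 1 * y 0) + a * (x 2 * y 3 - x 3 * y 2)
      - b * (x 0 * y 2 - x 2 * y 0) - b * (x 1 * y 3 - x 3 * y 1)
      - c * (x 0 * y 3 - x 3 * y 0) + c * (x 1 * y 2 - x 2 * y 1)

lemma br_apply (a b c : ℝ) (x y : V) (k : Fin 5) :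
    br a b c x y k = if k = 4 then B a b c x y else 0 := rfl

lemma ip_br (a b c : ℝ) (u v w : V) : ip (br a b c u v) w = B a b c u v * w 4 := by
  simp [ip, br, B, Fin.sum_univ_five]

lemma ip_E (v : V) (k : Fin 5) : ip v (E k) = v k := by
  fin_cases k <;> simp [ip, E, Fin.sum_univ_five, Pi.single_apply]

lemma E_apply (i k : Fin 5) : E i k = if k = i then 1 else 0 := Pi.single_apply i 1 k

lemma conn1_eq (a b c : ℝ) (i j : Fin 5) (x : V) :
    conn1 (nablaG a b c) i j x =
      (1/2) * ((if i = 4 then B a b c x (E j) else 0) - B a b c (E j) (E i) * x 4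
        + (if j = 4 then B a b c (E i) x else 0)) := by
  simp only [conn1, nablaG, ip_E, ip_br, br_apply]

lemma B_skew (a b c : ℝ) (x y : V) : B a b c x y = -B a b c y x := by
  simp only [B]; ring

lemma conn1_skew (a b c : ℝ) (p q : Fin 5) (z : V) :
    conn1 (nablaG a b c) p q z = -conn1 (nablaG a b c) q p z := by
  rw [conn1_eq, conn1_eq, B_skew a b c (E q) (E p), B_skew a b c z (E q),
    B_skew a b c z (E p)]
  split_ifs <;> ring

lemma curv_skew (a b c : ℝ) (σ : Fin 5 → Fin 5 → V → ℝ)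
    (hσ : ∀ p q z, σ p q z = -σ q p z) (i j : Fin 5) (x y : V) :
    curv a b c σ j i x y = -curv a b c σ i j x y := by
  simp only [curv, d1]
  rw [hσ j i]
  rw [show (∑ k, (σ j k x * σ k i y - σ j k y * σ k i x))
      = -∑ k, (σ i k x * σ k j y - σ i k y * σ k j x) by
    rw [← Finset.sum_neg_distrib]
    refine Finset.sum_congr rfl fun k _ => ?_
    rw [hσ j k x, hσ j k y, hσ k i x, hσ k i y]; ring]
  ring

section SLemmas
variable {a b c : ℝ}

lemma s00 (x : V) : conn1 (nablaG a b c) 0 0 x = 0 := by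
  rw [conn1_eq]; simp [B, E_apply]; try ring

lemma s01 (x : V) : conn1 (nablaG a b c) 0 1 x = -(a/2) * x 4 := by
  rw [conn1_eq]; simp [B, E_apply]; try ring

lemma s02 (x : V) : conn1 (nablaG a b c) 0 2 x = -(b/2) * x 4 := by
  rw [conn1_eq]; simp [B, E_apply]; try ring

lemma s03 (x : V) : conn1 (nablaG a b c) 0 3 x = -(c/2) * x 4 := by
  rw [conn1_eq]; simp [B, E_apply]; try ring

lemma s04 (x : V) : conn1 (nablaG a b c) 0 4 x = (-(a/2) * x 1 - (b/2) * x 2 - (c/2) * x 3) := by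
  rw [conn1_eq]; simp [B, E_apply]; try ring

lemma s10 (x : V) : conn1 (nablaG a b c) 1 0 x = (a/2) * x 4 := by
  rw [conn1_eq]; simp [B, E_apply]; try ring

lemma s11 (x : V) : conn1 (nablaG a b c) 1 1 x = 0 := by
  rw [conn1_eq]; simp [B, E_apply]; try ring

lemma s12 (x : V) : conn1 (nablaG a b c) 1 2 x = (c/2) * x 4 := by
  rw [conn1_eq]; simp [B, E_apply]; try ring

lemma s13 (x : V) : conn1 (nablaG a b c) 1 3 x = -(b/2) * x 4 := by
  rw [conn1_eq]; simp [B, E_apply]; try ring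

lemma s14 (x : V) : conn1 (nablaG a b c) 1 4 x = ((a/2) * x 0 + (c/2) * x 2 - (b/2) * x 3) := by
  rw [conn1_eq]; simp [B, E_apply]; try ring

lemma s20 (x : V) : conn1 (nablaG a b c) 2 0 x = (b/2) * x 4 := by
  rw [conn1_eq]; simp [B, E_apply]; try ring

lemma s21 (x : V) : conn1 (nablaG a b c) 2 1 x = -(c/2) * x 4 := by
  rw [conn1_eq]; simp [B, E_apply]; try ring

lemma s22 (x : V) : conn1 (nablaG a b c) 2 2 x = 0 := by
  rw [conn1_eq]; simp [B, E_apply]; try ring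

lemma s23 (x : V) : conn1 (nablaG a b c) 2 3 x = (a/2) * x 4 := by
  rw [conn1_eq]; simp [B, E_apply]; try ring

lemma s24 (x : V) : conn1 (nablaG a b c) 2 4 x = ((b/2) * x 0 - (c/2) * x 1 + (a/2) * x 3) := by
  rw [conn1_eq]; simp [B, E_apply]; try ring

lemma s30 (x : V) : conn1 (nablaG a b c) 3 0 x = (c/2) * x 4 := by
  rw [conn1_eq]; simp [B, E_apply]; try ring

lemma s31 (x : V) : conn1 (nablaG a b c) 3 1 x = (b/2) * x 4 := by
  rw [conn1_eq]; simp [B, E_apply]; try ring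

lemma s32 (x : V) : conn1 (nablaG a b c) 3 2 x = -(a/2) * x 4 := by
  rw [conn1_eq]; simp [B, E_apply]; try ring

lemma s33 (x : V) : conn1 (nablaG a b c) 3 3 x = 0 := by
  rw [conn1_eq]; simp [B, E_apply]; try ring

lemma s34 (x : V) : conn1 (nablaG a b c) 3 4 x = ((c/2) * x 0 + (b/2) * x 1 - (a/2) * x 2) := by
  rw [conn1_eq]; simp [B, E_apply]; try ring

lemma s40 (x : V) : conn1 (nablaG a b c) 4 0 x = (-(-(a/2) * x 1 - (b/2) * x 2 - (c/2) * x 3)) := by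
  rw [conn1_eq]; simp [B, E_apply]; try ring

lemma s41 (x : V) : conn1 (nablaG a b c) 4 1 x = (-((a/2) * x 0 + (c/2) * x 2 - (b/2) * x 3)) := by
  rw [conn1_eq]; simp [B, E_apply]; try ring

lemma s42 (x : V) : conn1 (nablaG a b c) 4 2 x = (-((b/2) * x 0 - (c/2) * x 1 + (a/2) * x 3)) := by
  rw [conn1_eq]; simp [B, E_apply]; try ring

lemma s43 (x : V) : conn1 (nablaG a b c) 4 3 x = (-((c/2) * x 0 + (b/2) * x 1 - (a/2) * x 2)) := by
  rw [conn1_eq]; simp [B, E_apply]; try ring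

lemma s44 (x : V) : conn1 (nablaG a b c) 4 4 x = 0 := by
  rw [conn1_eq]; simp [B, E_apply]; try ring

end SLemmas


lemma curv01 (a b c : ℝ) (x y : V) :
    curv a b c (conn1 (nablaG a b c)) 0 1 x y = -(3 * a / 4) * dEta a b c x y - ((a ^ 2 + b ^ 2 + c ^ 2) / 4) * w11 (e 2) (e 3) x y := by
  simp only [curv, d1, Fin.sum_univ_five, s00, s01, s02, s03, s04, s10, s11, s12, s13, s14, s20, s21, s22, s23, s24, s30, s31, s32, s33, s34, s40, s41, s42, s43, s44, dEta, e, w11, br_apply, B, Fin.reduceEq, reduceIte]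
  norm_num
  try ring

lemma curv02 (a b c : ℝ) (x y : V) :
    curv a b c (conn1 (nablaG a b c)) 0 2 x y = -(3 * b / 4) * dEta a b c x y + ((a ^ 2 + b ^ 2 + c ^ 2) / 4) * w11 (e 1) (e 3) x y := by
  simp only [curv, d1, Fin.sum_univ_five, s00, s01, s02, s03, s04, s10, s11, s12, s13, s14, s20, s21, s22, s23, s24, s30, s31, s32, s33, s34, s40, s41, s42, s43, s44, dEta, e, w11, br_apply, B, Fin.reduceEq, reduceIte]
  norm_num
  try ring

lemma curv03 (a b c : ℝ) (x y : V) :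
    curv a b c (conn1 (nablaG a b c)) 0 3 x y = -(3 * c / 4) * dEta a b c x y - ((a ^ 2 + b ^ 2 + c ^ 2) / 4) * w11 (e 1) (e 2) x y := by
  simp only [curv, d1, Fin.sum_univ_five, s00, s01, s02, s03, s04, s10, s11, s12, s13, s14, s20, s21, s22, s23, s24, s30, s31, s32, s33, s34, s40, s41, s42, s43, s44, dEta, e, w11, br_apply, B, Fin.reduceEq, reduceIte]
  norm_num
  try ring

lemma curv04 (a b c : ℝ) (x y : V) :
    curv a b c (conn1 (nablaG a b c)) 0 4 x y = ((a ^ 2 + b ^ 2 + c ^ 2) / 4) * w11 (e 0) (e 4) x y := by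
  simp only [curv, d1, Fin.sum_univ_five, s00, s01, s02, s03, s04, s10, s11, s12, s13, s14, s20, s21, s22, s23, s24, s30, s31, s32, s33, s34, s40, s41, s42, s43, s44, dEta, e, w11, br_apply, B, Fin.reduceEq, reduceIte]
  norm_num
  try ring

lemma curv12 (a b c : ℝ) (x y : V) :
    curv a b c (conn1 (nablaG a b c)) 1 2 x y = (3 * c / 4) * dEta a b c x y - ((a ^ 2 + b ^ 2 + c ^ 2) / 4) * w11 (e 0) (e 3) x y := by
  simp only [curv, d1, Fin.sum_univ_five, s00, s01, s02, s03, s04, s10, s11, s12, s13, s14, s20, s21, s22, s23, s24, s30, s31, s32, s33, s34, s40, s41, s42, s43, s44, dEta, e, w11, br_apply, B, Fin.reduceEq, reduceIte]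
  norm_num
  try ring

lemma curv13 (a b c : ℝ) (x y : V) :
    curv a b c (conn1 (nablaG a b c)) 1 3 x y = -(3 * b / 4) * dEta a b c x y + ((a ^ 2 + b ^ 2 + c ^ 2) / 4) * w11 (e 0) (e 2) x y := by
  simp only [curv, d1, Fin.sum_univ_five, s00, s01, s02, s03, s04, s10, s11, s12, s13, s14, s20, s21, s22, s23, s24, s30, s31, s32, s33, s34, s40, s41, s42, s43, s44, dEta, e, w11, br_apply, B, Fin.reduceEq, reduceIte]
  norm_num
  try ring

lemma curv14 (a b c : ℝ) (x y : V) :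
    curv a b c (conn1 (nablaG a b c)) 1 4 x y = ((a ^ 2 + b ^ 2 + c ^ 2) / 4) * w11 (e 1) (e 4) x y := by
  simp only [curv, d1, Fin.sum_univ_five, s00, s01, s02, s03, s04, s10, s11, s12, s13, s14, s20, s21, s22, s23, s24, s30, s31, s32, s33, s34, s40, s41, s42, s43, s44, dEta, e, w11, br_apply, B, Fin.reduceEq, reduceIte]
  norm_num
  try ring

lemma curv23 (a b c : ℝ) (x y : V) :
    curv a b c (conn1 (nablaG a b c)) 2 3 x y = (3 * a / 4) * dEta a b c x y - ((a ^ 2 + b ^ 2 + c ^ 2) / 4) * w11 (e 0) (e 1) x y := by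
  simp only [curv, d1, Fin.sum_univ_five, s00, s01, s02, s03, s04, s10, s11, s12, s13, s14, s20, s21, s22, s23, s24, s30, s31, s32, s33, s34, s40, s41, s42, s43, s44, dEta, e, w11, br_apply, B, Fin.reduceEq, reduceIte]
  norm_num
  try ring

lemma curv24 (a b c : ℝ) (x y : V) :
    curv a b c (conn1 (nablaG a b c)) 2 4 x y = ((a ^ 2 + b ^ 2 + c ^ 2) / 4) * w11 (e 2) (e 4) x y := by
  simp only [curv, d1, Fin.sum_univ_five, s00, s01, s02, s03, s04, s10, s11, s12, s13, s14, s20, s21, s22, s23, s24, s30, s31, s32, s33, s34, s40, s41, s42, s43, s44, dEta, e, w11, br_apply, B, Fin.reduceEq, reduceIte]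
  norm_num
  try ring

lemma curv34 (a b c : ℝ) (x y : V) :
    curv a b c (conn1 (nablaG a b c)) 3 4 x y = ((a ^ 2 + b ^ 2 + c ^ 2) / 4) * w11 (e 3) (e 4) x y := by
  simp only [curv, d1, Fin.sum_univ_five, s00, s01, s02, s03, s04, s10, s11, s12, s13, s14, s20, s21, s22, s23, s24, s30, s31, s32, s33, s34, s40, s41, s42, s43, s44, dEta, e, w11, br_apply, B, Fin.reduceEq, reduceIte]
  norm_num
  try ring

/-- with r = a²+b²+c², the curvature 2-forms of the Levi-Civita
connection of 𝔥(2,1)_{a,b,c} are Ωⁱ₅ = (r/4) eⁱ∧e⁵ for i = 1,…,4, and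
Ω¹₂ = −(3a/4)·de⁵ − (r/4)e³∧e⁴, Ω¹₃ = −(3b/4)·de⁵ + (r/4)e²∧e⁴,
Ω¹₄ = −(3c/4)·de⁵ − (r/4)e²∧e³, Ω²₃ = (3c/4)·de⁵ − (r/4)e¹∧e⁴,
Ω²₄ = −(3b/4)·de⁵ + (r/4)e¹∧e³, Ω³₄ = (3a/4)·de⁵ − (r/4)e¹∧e², with Ωⱼᵢ = −Ωⁱⱼ. -/
theorem levi_civita_curvature (a b c : ℝ) (h : a ^ 2 + b ^ 2 + c ^ 2 ≠ 0) :
    let r := a ^ 2 + b ^ 2 + c ^ 2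
    (∀ i : Fin 5, i ≠ 4 → ∀ x y : V,
      curv a b c (conn1 (nablaG a b c)) i 4 x y = (r / 4) * w11 (e i) (e 4) x y)
    ∧ (∀ x y : V, curv a b c (conn1 (nablaG a b c)) 0 1 x y =
        -(3 * a / 4) * dEta a b c x y - (r / 4) * w11 (e 2) (e 3) x y)
    ∧ (∀ x y : V, curv a b c (conn1 (nablaG a b c)) 0 2 x y =
        -(3 * b / 4) * dEta a b c x y + (r / 4) * w11 (e 1) (e 3) x y)
    ∧ (∀ x y : V, curv a b c (conn1 (nablaG a b c)) 0 3 x y =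
        -(3 * c / 4) * dEta a b c x y - (r / 4) * w11 (e 1) (e 2) x y)
    ∧ (∀ x y : V, curv a b c (conn1 (nablaG a b c)) 1 2 x y =
        (3 * c / 4) * dEta a b c x y - (r / 4) * w11 (e 0) (e 3) x y)
    ∧ (∀ x y : V, curv a b c (conn1 (nablaG a b c)) 1 3 x y =
        -(3 * b / 4) * dEta a b c x y + (r / 4) * w11 (e 0) (e 2) x y)
    ∧ (∀ x y : V, curv a b c (conn1 (nablaG a b c)) 2 3 x y =
        (3 * a / 4) * dEta a b c x y - (r / 4) * w11 (e 0) (e 1) x y)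
    ∧ (∀ i j : Fin 5, ∀ x y : V,
        curv a b c (conn1 (nablaG a b c)) j i x y
          = -curv a b c (conn1 (nablaG a b c)) i j x y) := by
  intro r
  have hr : r = a ^ 2 + b ^ 2 + c ^ 2 := rfl
  refine ⟨?_, fun x y => curv01 a b c x y, fun x y => curv02 a b c x y,
    fun x y => curv03 a b c x y, fun x y => curv12 a b c x y,
    fun x y => curv13 a b c x y, fun x y => curv23 a b c x y,
    fun i j x y => curv_skew a b c _ (conn1_skew a b c) i j x y⟩
  intro i hi x y
  fin_cases i
  · exact curv04 a b c x y
  · exact curv14 a b c x y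
  · exact curv24 a b c x y
  · exact curv34 a b c x y
  · exact absurd rfl hi
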